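/- For all integers s, t ≥ 0, n ≥ 2 with s + t ≤ n and any real q ∈ [0,1), one has W^C_{s,t}(n) = W^A_{s,t}(n): interchanging the first two columns gives a weight-preserving bijection between the linked multiline queues counted by W^C and those counted by W^A. -/

import Mathlib

open scoped Classical

noncomputable section

/-- `[r]_q = 1 + q + ... + q^(r-1)`, with `[0]_q = 0`. -/
def qa (q : ℝ) (r : ℕ) : ℝ := ∑ m ∈ Finset.range r, q ^ m

/-- The factor contributed by an element `a` of the first row that is linked to `b`
when the set of available elements of the second row is `D`: if `b` is the `m`-th
element of `D` in increasing order of cyclic distance `(· - a) mod k`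
(the ring `Z_k` being identified with `{1, …, k}`) and `r = |D|`, the factor is
`q^(m-1) / [r]_q`. -/
def stepW (q : ℝ) (k a : ℕ) (D : Finset ℕ) (b : ℕ) : ℝ :=
  q ^ ((D.filter fun c => (c + k - a) % k < (b + k - a) % k).card) / qa q D.card

/-- Product of the factors obtained by processing the elements of the first list
in order, starting with available set `D`; each processed `a` is linked to `F a`,
which then becomes unavailable. -/
def chainW (q : ℝ) (k : ℕ) (F : ℕ → ℕ) : List ℕ → Finset ℕ → ℝ
  | [], _ => 1
  | a :: l, D => stepW q k a D (F a) * chainW q k F l (D.erase (F a))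

/-- The weight `wt(A, B, F)` of a linked two-row multiline queue on `Z_k = {1,…,k}`:
trivial links (elements of `A ∩ B`, linked to themselves) contribute a factor `1`;
the elements of `A \ B` are processed in increasing order, the initially available
elements of the second row being those of `B \ A`. -/
def mlqW (q : ℝ) (k : ℕ) (A B : Finset ℕ) (F : ℕ → ℕ) : ℝ :=
  chainW q k F ((A \ B).sort (· ≤ ·)) (B \ A)

/-- Extend an injection `f : A ↪ B` to a function `ℕ → ℕ` (identity off `A`). -/
def extendF (A B : Finset ℕ) (f : ↥A ↪ ↥B) : ℕ → ℕ :=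
  fun x => if h : x ∈ A then (f ⟨x, h⟩).1 else x

/-- Sum of the weights `wt(A, B, f)` over all two-row multiline queues `(A, B)` on
`Z_k = {1,…,k}` and all linkings `f` of `(A, B)` (injections `f : A → B` with
`f a = a` for all `a ∈ A ∩ B`) satisfying the condition `cond A B f`. -/
def mlqSum (q : ℝ) (k : ℕ)
    (cond : Finset ℕ → Finset ℕ → (ℕ → ℕ) → Prop) : ℝ :=
  ∑ A ∈ (Finset.Icc 1 k).powerset, ∑ B ∈ (Finset.Icc 1 k).powerset,
    ∑ f : (↥A ↪ ↥B),
      if (∀ a ∈ A ∩ B, extendF A B f a = a) ∧ cond A B (extendF A B f)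
      then mlqW q k A B (extendF A B f) else 0

/-- `η_{s,t}(k)`: the total weight of linked two-row multiline queues of type
`(s, t, k-s-t)` on `Z_k` with disjoint rows whose projected word begins with `2`
(i.e. `1 ∈ B \ f(A)`). -/
def eta (q : ℝ) (s t k : ℕ) : ℝ :=
  mlqSum q k fun A B F =>
    A ∩ B = ∅ ∧ A.card = s ∧ B.card = s + t ∧ 1 ∈ B ∧ 1 ∉ A.image F

/-- `W^A_{s,t}(n)`: total weight of linked MLQs of type `(s,t,n-s-t)` with
`1 ∉ A`, `2 ∉ A`, `1 ∉ B`, `2 ∈ B`, `2 ∉ f(A)` (projected word begins with `3,2`). -/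
def WA (q : ℝ) (s t n : ℕ) : ℝ :=
  mlqSum q n fun A B F =>
    A.card = s ∧ B.card = s + t ∧ 1 ∉ A ∧ 2 ∉ A ∧ 1 ∉ B ∧ 2 ∈ B ∧ 2 ∉ A.image F

/-- `τ^A_{s,t}(n)`: as `W^A_{s,t}(n)`, restricted to `A ∩ B = ∅`. -/
def tauA (q : ℝ) (s t n : ℕ) : ℝ :=
  mlqSum q n fun A B F =>
    A ∩ B = ∅ ∧
    A.card = s ∧ B.card = s + t ∧ 1 ∉ A ∧ 2 ∉ A ∧ 1 ∉ B ∧ 2 ∈ B ∧ 2 ∉ A.image F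

/-- `W^B_{s,t}(n)`: total weight of linked MLQs of type `(s,t,n-s-t)` with
`1 ∈ A`, `2 ∉ A`, `1 ∉ B`, `2 ∈ B`, `2 ∉ f(A)` (projected word begins with `3,2`). -/
def WB (q : ℝ) (s t n : ℕ) : ℝ :=
  mlqSum q n fun A B F =>
    A.card = s ∧ B.card = s + t ∧ 1 ∈ A ∧ 2 ∉ A ∧ 1 ∉ B ∧ 2 ∈ B ∧ 2 ∉ A.image F

/-- `τ^B_{s,t}(n)`: as `W^B_{s,t}(n)`, restricted to `A ∩ B = ∅`. -/
def tauB (q : ℝ) (s t n : ℕ) : ℝ :=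
  mlqSum q n fun A B F =>
    A ∩ B = ∅ ∧
    A.card = s ∧ B.card = s + t ∧ 1 ∈ A ∧ 2 ∉ A ∧ 1 ∉ B ∧ 2 ∈ B ∧ 2 ∉ A.image F

/-- `W^C_{s,t}(n)`: total weight of linked MLQs of type `(s,t,n-s-t)` with
`1 ∉ A`, `2 ∉ A`, `1 ∈ B`, `2 ∉ B`, `1 ∉ f(A)` (projected word begins with `2,3`). -/
def WC (q : ℝ) (s t n : ℕ) : ℝ :=
  mlqSum q n fun A B F =>
    A.card = s ∧ B.card = s + t ∧ 1 ∉ A ∧ 2 ∉ A ∧ 1 ∈ B ∧ 2 ∉ B ∧ 1 ∉ A.image F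

/-- `W^D_{s,t}(n)`: total weight of linked MLQs of type `(s,t,n-s-t)` with
`1 ∉ A`, `2 ∈ A`, `1 ∈ B`, `2 ∉ B`, `1 ∉ f(A)` (projected word begins with `2,3`). -/
def WD (q : ℝ) (s t n : ℕ) : ℝ :=
  mlqSum q n fun A B F =>
    A.card = s ∧ B.card = s + t ∧ 1 ∉ A ∧ 2 ∈ A ∧ 1 ∈ B ∧ 2 ∉ B ∧ 1 ∉ A.image F

/-- `τ^D_{s,t}(n)`: as `W^D_{s,t}(n)`, restricted to `A ∩ B = ∅`. -/
def tauD (q : ℝ) (s t n : ℕ) : ℝ :=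
  mlqSum q n fun A B F =>
    A ∩ B = ∅ ∧
    A.card = s ∧ B.card = s + t ∧ 1 ∉ A ∧ 2 ∈ A ∧ 1 ∈ B ∧ 2 ∉ B ∧ 1 ∉ A.image F

end

/-! ### Auxiliary material for the proof -/

/-- The permutation of `ℕ` swapping `1` and `2`. -/
def sw : Equiv.Perm ℕ := Equiv.swap 1 2

lemma sw_one : sw 1 = 2 := Equiv.swap_apply_left 1 2

lemma sw_two : sw 2 = 1 := Equiv.swap_apply_right 1 2

lemma sw_apply_of {x : ℕ} (h1 : x ≠ 1) (h2 : x ≠ 2) : sw x = x :=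
  Equiv.swap_apply_of_ne_of_ne h1 h2

lemma sw_sw (x : ℕ) : sw (sw x) = x := Equiv.swap_apply_self 1 2 x

lemma mem_image_sw {D : Finset ℕ} {x : ℕ} : x ∈ D.image sw ↔ sw x ∈ D := by
  constructor
  · intro h
    obtain ⟨y, hy, rfl⟩ := Finset.mem_image.1 h
    rwa [sw_sw]
  · intro h
    exact Finset.mem_image.2 ⟨sw x, h, sw_sw x⟩

lemma dist_iff {n a b : ℕ} (ha : 3 ≤ a) (han : a ≤ n) (hb : 3 ≤ b) (hbn : b ≤ n) :
    ((1 + n - a) % n < (b + n - a) % n) ↔ ((2 + n - a) % n < (b + n - a) % n) := by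
  have h1 : (1 + n - a) % n = 1 + n - a := Nat.mod_eq_of_lt (by omega)
  have h2 : (2 + n - a) % n = 2 + n - a := Nat.mod_eq_of_lt (by omega)
  rcases le_or_gt a b with h | h
  · have e : b + n - a = (b - a) + n := by omega
    have hb' : (b + n - a) % n = b - a := by
      rw [e, Nat.add_mod_right, Nat.mod_eq_of_lt (by omega)]
    omega
  · have hb' : (b + n - a) % n = b + n - a := Nat.mod_eq_of_lt (by omega)
    omega

lemma step_swap (q : ℝ) {n a b : ℕ} (ha : 3 ≤ a) (han : a ≤ n) (hb : 3 ≤ b) (hbn : b ≤ n)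
    (D : Finset ℕ) (h2D : 2 ∉ D) :
    stepW q n a (D.image sw) b = stepW q n a D b := by
  unfold stepW
  have hfilter : (D.image sw).filter (fun c => (c + n - a) % n < (b + n - a) % n) =
      (D.filter fun c => (sw c + n - a) % n < (b + n - a) % n).image sw := by
    ext x
    simp only [Finset.mem_filter, mem_image_sw, sw_sw]
  have hcongr : (D.filter fun c => (sw c + n - a) % n < (b + n - a) % n) =
      (D.filter fun c => (c + n - a) % n < (b + n - a) % n) := by
    refine Finset.filter_congr fun c hc => ?_
    by_cases hc1 : c = 1
    · subst hc1
      rw [sw_one]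
      exact (dist_iff ha han hb hbn).symm
    by_cases hc2 : c = 2
    · exact absurd (hc2 ▸ hc) h2D
    · rw [sw_apply_of hc1 hc2]
  rw [hfilter, hcongr, Finset.card_image_of_injective _ sw.injective,
    Finset.card_image_of_injective _ sw.injective]

lemma chain_swap (q : ℝ) (n : ℕ) (F F' : ℕ → ℕ) :
    ∀ (l : List ℕ) (D : Finset ℕ), 2 ∉ D →
      (∀ a ∈ l, 3 ≤ a ∧ a ≤ n ∧ F' a = F a ∧ 3 ≤ F a ∧ F a ≤ n) →
      chainW q n F' l (D.image sw) = chainW q n F l D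
  | [], D, _, _ => rfl
  | a :: l, D, h2D, hl => by
    obtain ⟨ha3, han, hFa, hF3, hFn⟩ := hl a List.mem_cons_self
    have hb : sw (F a) = F a := sw_apply_of (by omega) (by omega)
    have hre : (D.image sw).erase (F' a) = (D.erase (F a)).image sw := by
      rw [hFa, ← hb, ← Finset.image_erase sw.injective D (F a), hb]
    rw [chainW, chainW, hre, hFa,
      chain_swap q n F F' l (D.erase (F a))
        (fun h => h2D (Finset.mem_of_mem_erase h))
        (fun x hx => hl x (List.mem_cons_of_mem a hx)),
      step_swap q ha3 han hF3 hFn D h2D]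

/-- `W^C_{s,t}(n) = W^A_{s,t}(n)`: interchanging the first two columns gives a
weight-preserving bijection between the linked multiline queues counted by `W^C`
and those counted by `W^A`. -/
theorem WC_eq_WA (q : ℝ) (hq0 : 0 ≤ q) (hq1 : q < 1)
    (s t n : ℕ) (hn : 2 ≤ n) (hst : s + t ≤ n) :
    WC q s t n = WA q s t n := by
  classical
  unfold WC WA mlqSum
  refine Finset.sum_congr rfl fun A hA => ?_
  have hAsub : A ⊆ Finset.Icc 1 n := Finset.mem_powerset.1 hA
  have hmaps : ∀ B ∈ (Finset.Icc 1 n).powerset, B.image sw ∈ (Finset.Icc 1 n).powerset := by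
    intro B hB
    rw [Finset.mem_powerset] at hB ⊢
    intro x hx
    obtain ⟨y, hy, rfl⟩ := Finset.mem_image.1 hx
    have hy' := hB hy
    rw [Finset.mem_Icc] at hy' ⊢
    by_cases h1 : y = 1
    · subst h1; rw [sw_one]; omega
    by_cases h2 : y = 2
    · subst h2; rw [sw_two]; omega
    · rw [sw_apply_of h1 h2]; omega
  have hinv : ∀ B : Finset ℕ, (B.image sw).image sw = B := by
    intro B; ext x; rw [mem_image_sw, mem_image_sw, sw_sw]
  refine Finset.sum_nbij' (fun B => B.image sw) (fun B => B.image sw)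
    hmaps hmaps (fun B _ => hinv B) (fun B _ => hinv B) ?_
  intro B hB
  have hBsub : B ⊆ Finset.Icc 1 n := Finset.mem_powerset.1 hB
  -- the equivalence between the two embedding types
  have hmemiff : ∀ x : ℕ, x ∈ B ↔ sw x ∈ B.image sw := by
    intro x
    rw [mem_image_sw, sw_sw]
  refine Fintype.sum_equiv
    (Equiv.embeddingCongr (Equiv.refl ↥A) (Equiv.subtypeEquiv sw hmemiff)) _ _ fun f => ?_
  set F : ℕ → ℕ := extendF A B f with hF
  set f' : ↥A ↪ ↥(B.image sw) :=
    (Equiv.embeddingCongr (Equiv.refl ↥A) (Equiv.subtypeEquiv sw hmemiff)) f with hf'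
  set F' : ℕ → ℕ := extendF A (B.image sw) f' with hF'def
  have hFA : ∀ x (hx : x ∈ A), F x = (f ⟨x, hx⟩).1 := by
    intro x hx
    simp only [hF, extendF, dif_pos hx]
  have hFmem : ∀ x ∈ A, F x ∈ B := by
    intro x hx
    rw [hFA x hx]
    exact (f ⟨x, hx⟩).2
  have hF'sw : ∀ x ∈ A, F' x = sw (F x) := by
    intro x hx
    simp only [hF'def, extendF, dif_pos hx, hFA x hx]
    rfl
  have hF'memB' : ∀ x ∈ A, F' x ∈ B.image sw := by
    intro x hx
    rw [hF'sw x hx]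
    exact Finset.mem_image_of_mem _ (hFmem x hx)
  by_cases hc : (∀ a ∈ A ∩ B, F a = a) ∧
      A.card = s ∧ B.card = s + t ∧ 1 ∉ A ∧ 2 ∉ A ∧ 1 ∈ B ∧ 2 ∉ B ∧ 1 ∉ A.image F
  · obtain ⟨htriv, hs, ht, h1A, h2A, h1B, h2B, h1F⟩ := hc
    have hAne : ∀ x ∈ A, x ≠ 1 ∧ x ≠ 2 := by
      intro x hx
      exact ⟨fun h => h1A (h ▸ hx), fun h => h2A (h ▸ hx)⟩
    have hFne : ∀ x ∈ A, F x ≠ 1 ∧ F x ≠ 2 := by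
      intro x hx
      refine ⟨fun h => h1F ?_, fun h => h2B (h ▸ hFmem x hx)⟩
      exact Finset.mem_image.2 ⟨x, hx, h⟩
    have hF'eq : ∀ x ∈ A, F' x = F x := by
      intro x hx
      rw [hF'sw x hx, sw_apply_of (hFne x hx).1 (hFne x hx).2]
    have himg : A.image F' = A.image F := Finset.image_congr fun x hx => hF'eq x hx
    have hswA : ∀ x, x ∈ A → sw x = x := fun x hx =>
      sw_apply_of (hAne x hx).1 (hAne x hx).2
    have hcond' : (∀ a ∈ A ∩ B.image sw, F' a = a) ∧
        A.card = s ∧ (B.image sw).card = s + t ∧ 1 ∉ A ∧ 2 ∉ A ∧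
        1 ∉ B.image sw ∧ 2 ∈ B.image sw ∧ 2 ∉ A.image F' := by
      refine ⟨?_, hs, by rwa [Finset.card_image_of_injective _ sw.injective], h1A, h2A,
        ?_, ?_, ?_⟩
      · intro a ha
        obtain ⟨haA, haB'⟩ := Finset.mem_inter.1 ha
        have haB : a ∈ B := by
          rw [mem_image_sw, hswA a haA] at haB'
          exact haB'
        rw [hF'eq a haA]
        exact htriv a (Finset.mem_inter.2 ⟨haA, haB⟩)
      · rw [mem_image_sw, sw_one]; exact h2B
      · rw [mem_image_sw, sw_two]; exact h1B
      · rw [himg]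
        intro h
        obtain ⟨a, ha, hFa⟩ := Finset.mem_image.1 h
        exact h2B (hFa ▸ hFmem a ha)
    rw [if_pos ⟨htriv, hs, ht, h1A, h2A, h1B, h2B, h1F⟩, if_pos hcond']
    -- weight equality
    have hsd : A \ B.image sw = A \ B := by
      ext x
      by_cases hx : x ∈ A
      · simp only [Finset.mem_sdiff, hx, true_and, mem_image_sw, hswA x hx]
      · simp [Finset.mem_sdiff, hx]
    have hDD : B.image sw \ A = (B \ A).image sw := by
      ext x
      rw [Finset.mem_sdiff, mem_image_sw, mem_image_sw, Finset.mem_sdiff]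
      have : x ∉ A ↔ sw x ∉ A := by
        by_cases h1 : x = 1
        · subst h1; rw [sw_one]; simp [h1A, h2A]
        by_cases h2 : x = 2
        · subst h2; rw [sw_two]; simp [h1A, h2A]
        · rw [sw_apply_of h1 h2]
      rw [this]
    rw [mlqW, mlqW, hsd, hDD]
    refine (chain_swap q n F F' _ (B \ A) (fun h => h2B (Finset.mem_sdiff.1 h).1) ?_).symm
    intro a hal
    have haAB : a ∈ A \ B := (Finset.mem_sort _).1 hal
    have haA : a ∈ A := (Finset.mem_sdiff.1 haAB).1
    have haI := Finset.mem_Icc.1 (hAsub haA)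
    have hane := hAne a haA
    have hFI := Finset.mem_Icc.1 (hBsub (hFmem a haA))
    have hFne' := hFne a haA
    exact ⟨by omega, haI.2, hF'eq a haA, by omega, hFI.2⟩
  · rw [if_neg hc, if_neg ?_]
    rintro ⟨htriv', hs, ht, h1A, h2A, h1B', h2B', h2F'⟩
    apply hc
    have h2B : 2 ∉ B := by
      intro h
      exact h1B' (mem_image_sw.2 (by rwa [sw_one]))
    have h1B : 1 ∈ B := by
      rw [mem_image_sw, sw_two] at h2B'
      exact h2B'
    have hF'ne : ∀ x ∈ A, F' x ≠ 1 ∧ F' x ≠ 2 := by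
      intro x hx
      refine ⟨fun h => h1B' (h ▸ hF'memB' x hx), fun h => h2F' ?_⟩
      exact Finset.mem_image.2 ⟨x, hx, h⟩
    have hF'eq : ∀ x ∈ A, F' x = F x := by
      intro x hx
      have h := hF'sw x hx
      have : sw (F' x) = F x := by rw [h, sw_sw]
      rw [← this, sw_apply_of (hF'ne x hx).1 (hF'ne x hx).2]
    have himg : A.image F' = A.image F := Finset.image_congr fun x hx => hF'eq x hx
    have hAne : ∀ x ∈ A, x ≠ 1 ∧ x ≠ 2 := by
      intro x hx
      exact ⟨fun h => h1A (h ▸ hx), fun h => h2A (h ▸ hx)⟩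
    refine ⟨?_, hs, by rwa [Finset.card_image_of_injective _ sw.injective] at ht, h1A, h2A,
      h1B, h2B, ?_⟩
    · intro a ha
      obtain ⟨haA, haB⟩ := Finset.mem_inter.1 ha
      have hswa : sw a = a := sw_apply_of (hAne a haA).1 (hAne a haA).2
      have haB' : a ∈ B.image sw := mem_image_sw.2 (by rwa [hswa])
      rw [← hF'eq a haA]
      exact htriv' a (Finset.mem_inter.2 ⟨haA, haB'⟩)
    · rw [← himg]
      intro h
      obtain ⟨a, ha, hFa⟩ := Finset.mem_image.1 h
      exact h1B' (hFa ▸ hF'memB' a ha)
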